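/- Let K be a flag simplicial complex on [m] containing a full subcomplex K_I that is a p-cycle with p ≥ 4 and vertex set I. Suppose that for every proper subset J ⊊ I and every J of the forms I ∪ {j} and {i_1, i_3, j_1, j_2} considered, H̃_1(K_J; ℤ) = 0 whenever J ≠ I. Then every vertex j ∉ I is joined by an edge to every vertex of I, and any two vertices j_1, j_2 ∉ I are joined by an edge; hence K = K_I ∗ Δ^q where q = m - p - 1. -/

import Mathlib

open Finset

noncomputable section

/-- An abstract simplicial complex on the vertex set `[m] = Fin m`
(the empty face is always included; faces are closed under passing to subsets). -/
structure SC (m : ℕ) where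
  faces : Set (Finset (Fin m))
  empty_mem : ∅ ∈ faces
  down_closed : ∀ s ∈ faces, ∀ t ⊆ s, t ∈ faces

variable {m : ℕ}

/-- The full subcomplex `K_J` on a vertex subset `J`. -/
def SC.full (K : SC m) (J : Finset (Fin m)) : SC m where
  faces := {s | s ∈ K.faces ∧ s ⊆ J}
  empty_mem := ⟨K.empty_mem, Finset.empty_subset J⟩
  down_closed := fun s hs t ht => ⟨K.down_closed s hs.1 t ht, ht.trans hs.2⟩

/-- `K` is a flag complex: every vertex is a face and every missing face has two vertices. -/
def SC.IsFlag (K : SC m) : Prop :=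
  (∀ v : Fin m, ({v} : Finset (Fin m)) ∈ K.faces) ∧
  ∀ s : Finset (Fin m), s ∉ K.faces → (∀ t ⊂ s, t ∈ K.faces) → s.card = 2

/-- The full subcomplex of `K` on `I` is the boundary of a `p`-gon (a `p`-cycle): its faces
are exactly the empty set, the vertices `f i` and the edges `{f i, f (i+1)}` for a cyclic
enumeration `f` of `I`. -/
def SC.IsPCycleOn (K : SC m) (I : Finset (Fin m)) (p : ℕ) : Prop :=
  ∃ f : ZMod p → Fin m, Function.Injective f ∧ (∀ v, v ∈ I ↔ ∃ i, f i = v) ∧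
    (K.full I).faces =
      {s | s = ∅ ∨ (∃ i, s = {f i}) ∨ ∃ i, s = ({f i, f (i + 1)} : Finset (Fin m))}

/-- `K = C_p` or `K = C_p ∗ Δ^q` (`q ≥ 0`): some `I` spans a `p`-cycle and a set is a face of
`K` exactly when its intersection with `I` is a face of the cycle (all vertices outside `I`
span a simplex joined to everything). -/
def SC.IsCycleJoinSimplex (K : SC m) (p : ℕ) : Prop :=
  ∃ I : Finset (Fin m), K.IsPCycleOn I p ∧
    K.faces = {s | s ∩ I ∈ (K.full I).faces}

/-- The set of `n`-dimensional simplices of `K`. -/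
def SC.simp (K : SC m) (n : ℕ) : Type :=
  {s : Finset (Fin m) // s ∈ K.faces ∧ s.card = n + 1}

/-- The group of simplicial `n`-chains of `K` with integer coefficients. -/
abbrev SC.Ch (K : SC m) (n : ℕ) : Type := K.simp n →₀ ℤ

/-- The `i`-th face of an `(n+1)`-simplex: delete the `i`-th vertex (in increasing order). -/
def SC.faceMap (K : SC m) {n : ℕ} (s : K.simp (n + 1)) (i : Fin (n + 2)) : K.simp n :=
  ⟨s.1.erase (s.1.orderEmbOfFin s.2.2 i),
   K.down_closed _ s.2.1 _ (Finset.erase_subset _ _),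
   by rw [Finset.card_erase_of_mem (Finset.orderEmbOfFin_mem _ s.2.2 i), s.2.2]; rfl⟩

/-- The simplicial boundary homomorphism `∂ : C_{n+1}(K) → C_n(K)`,
`∂s = Σ_i (-1)^i (i-th face of s)`. -/
def SC.bdry (K : SC m) (n : ℕ) : K.Ch (n + 1) →+ K.Ch n :=
  Finsupp.liftAddHom fun s => zmultiplesHom (K.Ch n)
    (∑ i : Fin (n + 2), ((-1 : ℤ) ^ (i : ℕ)) • Finsupp.single (K.faceMap s i) 1)

/-- The augmentation `ε : C_0(K) → ℤ`. -/
def SC.aug (K : SC m) : K.Ch 0 →+ ℤ :=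
  Finsupp.liftAddHom fun _ => AddMonoidHom.id ℤ

/-- The group of reduced `n`-cycles (using the augmentation in degree `0`). -/
def SC.cycles (K : SC m) : (n : ℕ) → AddSubgroup (K.Ch n)
  | 0 => (K.aug).ker
  | (n + 1) => (K.bdry n).ker

/-- Reduced simplicial homology `H̃_n(K; ℤ) = ker ∂_n / im ∂_{n+1}` (reduced in degree `0`
via the augmentation). -/
abbrev SC.redH (K : SC m) (n : ℕ) : Type :=
  (K.cycles n) ⧸ ((K.bdry n).range.comap (K.cycles n).subtype)


namespace SC

variable {m : ℕ}

/-- Vertex simplex. -/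
def vtx (L : SC m) (a : Fin m) (h : ({a} : Finset (Fin m)) ∈ L.faces) : L.simp 0 :=
  ⟨{a}, h, by simp⟩

/-- Edge simplex. -/
def edg (L : SC m) (a b : Fin m) (hab : a ≠ b) (h : ({a, b} : Finset (Fin m)) ∈ L.faces) :
    L.simp 1 := ⟨{a, b}, h, Finset.card_pair hab⟩

lemma bdry_edg (L : SC m) (a b : Fin m) (hab : a < b) (h : ({a, b} : Finset (Fin m)) ∈ L.faces)
    (ha : ({a} : Finset (Fin m)) ∈ L.faces) (hb : ({b} : Finset (Fin m)) ∈ L.faces) :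
    L.bdry 0 (Finsupp.single (L.edg a b hab.ne h) 1) =
      Finsupp.single (L.vtx b hb) 1 - Finsupp.single (L.vtx a ha) 1 := by
  have hmin : ({a, b} : Finset (Fin m)).min' (by simp) = a := by
    apply le_antisymm
    · exact Finset.min'_le _ _ (by simp)
    · apply Finset.le_min'
      intro y hy
      rcases Finset.mem_insert.mp hy with rfl | hy
      · exact le_rfl
      · rw [Finset.mem_singleton.mp hy]; exact hab.le
  have hmax : ({a, b} : Finset (Fin m)).max' (by simp) = b := by
    apply le_antisymm
    · apply Finset.max'_le
      intro y hy
      rcases Finset.mem_insert.mp hy with rfl | hy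
      · exact hab.le
      · rw [Finset.mem_singleton.mp hy]
    · exact Finset.le_max' _ _ (by simp)
  have h0 : L.faceMap (L.edg a b hab.ne h) 0 = L.vtx b hb := by
    apply Subtype.ext
    show ({a, b} : Finset (Fin m)).erase _ = {b}
    have : ((L.edg a b hab.ne h).1.orderEmbOfFin (L.edg a b hab.ne h).2.2 (0 : Fin 2)) = a := by
      rw [show (0 : Fin 2) = ⟨0, by norm_num⟩ from rfl, Finset.orderEmbOfFin_zero _ (by norm_num)]
      exact hmin
    rw [this]
    rw [show ({a, b} : Finset (Fin m)) = insert a {b} from rfl, Finset.erase_insert (by simp [hab.ne])]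
  have h1 : L.faceMap (L.edg a b hab.ne h) 1 = L.vtx a ha := by
    apply Subtype.ext
    show ({a, b} : Finset (Fin m)).erase _ = {a}
    have : ((L.edg a b hab.ne h).1.orderEmbOfFin (L.edg a b hab.ne h).2.2 (1 : Fin 2)) = b := by
      rw [show (1 : Fin 2) = ⟨2 - 1, by norm_num⟩ from rfl, Finset.orderEmbOfFin_last _ (by norm_num)]
      exact hmax
    rw [this, Finset.pair_comm, show ({b, a} : Finset (Fin m)) = insert b {a} from rfl,
      Finset.erase_insert (by simp [hab.ne'])]
  show (Finsupp.liftAddHom _) _ = _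
  rw [Finsupp.liftAddHom_apply_single, zmultiplesHom_apply, one_smul, Fin.sum_univ_two, h0, h1]
  norm_num
  rw [sub_eq_add_neg]

end SC

namespace SC

variable {m p : ℕ} [NeZero p]

/-- The fundamental cycle chain of an embedded `p`-gon. -/
def cyc (L : SC m) (f : ZMod p → Fin m) (hf : ∀ i, f i ≠ f (i + 1))
    (he : ∀ i, ({f i, f (i + 1)} : Finset (Fin m)) ∈ L.faces) : L.Ch 1 :=
  ∑ i : ZMod p, (if f i < f (i + 1) then (1 : ℤ) else -1) •
    Finsupp.single (L.edg (f i) (f (i + 1)) (hf i) (he i)) 1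

omit [NeZero p] in
lemma vtx_mem (L : SC m) {f : ZMod p → Fin m}
    (he : ∀ i, ({f i, f (i + 1)} : Finset (Fin m)) ∈ L.faces) (i : ZMod p) :
    ({f i} : Finset (Fin m)) ∈ L.faces :=
  L.down_closed _ (he i) _ (by simp)

lemma bdry_cyc (L : SC m) (f : ZMod p → Fin m) (hf : ∀ i, f i ≠ f (i + 1))
    (he : ∀ i, ({f i, f (i + 1)} : Finset (Fin m)) ∈ L.faces) :
    L.bdry 0 (L.cyc f hf he) = 0 := by
  rw [cyc, map_sum]
  have key : ∀ i : ZMod p,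
      L.bdry 0 ((if f i < f (i + 1) then (1 : ℤ) else -1) •
        Finsupp.single (L.edg (f i) (f (i + 1)) (hf i) (he i)) 1) =
      Finsupp.single (L.vtx (f (i + 1)) (L.vtx_mem he (i + 1))) 1
        - Finsupp.single (L.vtx (f i) (L.vtx_mem he i)) 1 := by
    intro i
    rw [map_zsmul]
    rcases lt_or_gt_of_ne (hf i) with hlt | hgt
    · rw [if_pos hlt, one_smul]
      exact L.bdry_edg _ _ hlt _ (L.vtx_mem he i) (L.vtx_mem he (i + 1))
    · rw [if_neg (not_lt.mpr hgt.le)]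
      have hee : L.edg (f i) (f (i + 1)) (hf i) (he i)
          = L.edg (f (i + 1)) (f i) (hf i).symm (Finset.pair_comm (f i) (f (i+1)) ▸ he i) := by
        apply Subtype.ext
        exact Finset.pair_comm _ _
      rw [hee, L.bdry_edg _ _ hgt _ (L.vtx_mem he (i + 1)) (L.vtx_mem he i)]
      rw [neg_one_smul, neg_sub]
  rw [Finset.sum_congr rfl (fun i _ => key i), Finset.sum_sub_distrib]
  rw [Fintype.sum_equiv (Equiv.addRight (1 : ZMod p))
    (fun i => Finsupp.single (L.vtx (f (i + 1)) (L.vtx_mem he (i + 1))) 1)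
    (fun i => Finsupp.single (L.vtx (f i) (L.vtx_mem he i)) 1) (fun i => rfl), sub_self]

omit [NeZero p] in
lemma pair_eq_iff {f : ZMod p → Fin m} (hinj : Function.Injective f)
    (h1 : (1 : ZMod p) ≠ 0) (h2 : (2 : ZMod p) ≠ 0) {i i₀ : ZMod p}
    (h : ({f i, f (i + 1)} : Finset (Fin m)) = {f i₀, f (i₀ + 1)}) : i = i₀ := by
  have hi : f i ∈ ({f i₀, f (i₀ + 1)} : Finset (Fin m)) := by rw [← h]; simp
  rcases Finset.mem_insert.mp hi with hi | hi
  · exact hinj hi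
  · exfalso
    obtain rfl : i = i₀ + 1 := hinj (Finset.mem_singleton.mp hi)
    have hi2 : f (i₀ + 1 + 1) ∈ ({f i₀, f (i₀ + 1)} : Finset (Fin m)) := by
      rw [← h]; simp
    rcases Finset.mem_insert.mp hi2 with h' | h'
    · exact h2 (by linear_combination hinj h')
    · exact h1 (by linear_combination hinj (Finset.mem_singleton.mp h'))

lemma cyc_apply (L : SC m) (f : ZMod p → Fin m) (hinj : Function.Injective f)
    (h1 : (1 : ZMod p) ≠ 0) (h2 : (2 : ZMod p) ≠ 0)
    (hf : ∀ i, f i ≠ f (i + 1))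
    (he : ∀ i, ({f i, f (i + 1)} : Finset (Fin m)) ∈ L.faces) (i₀ : ZMod p) :
    (L.cyc f hf he) (L.edg (f i₀) (f (i₀ + 1)) (hf i₀) (he i₀)) ≠ 0 := by
  classical
  rw [cyc, Finsupp.finset_sum_apply]
  rw [Finset.sum_eq_single_of_mem i₀ (Finset.mem_univ _)]
  · rw [Finsupp.smul_apply, Finsupp.single_apply, if_pos rfl]
    split <;> norm_num
  · intro i _ hne
    have hee : L.edg (f i) (f (i + 1)) (hf i) (he i)
        ≠ L.edg (f i₀) (f (i₀ + 1)) (hf i₀) (he i₀) := fun hee =>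
      hne (pair_eq_iff hinj h1 h2 (congrArg Subtype.val hee))
    rw [Finsupp.smul_apply, Finsupp.single_apply, if_neg hee, smul_zero]

end SC

namespace SC

variable {m : ℕ}

lemma zmod_natCast_ne_zero {p k : ℕ} [NeZero p] (hk : 0 < k) (hkp : k < p) :
    ((k : ZMod p)) ≠ 0 := by
  rw [Ne, ZMod.natCast_eq_zero_iff]
  intro hd
  exact absurd (Nat.le_of_dvd hk hd) (by omega)

/-- Main homological lemma: if `f` describes a `p`-gon (`p ≥ 3`) whose edges all lie in `L`,
and some vertex `f i₀` lies in no `2`-simplex of `L`, then `H̃₁(L)` is not trivial. -/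
lemma bdry_single (L : SC m) (n : ℕ) (s : L.simp (n + 1)) (c : ℤ) :
    L.bdry n (Finsupp.single s c) =
      c • ∑ i : Fin (n + 2), ((-1 : ℤ) ^ (i : ℕ)) • Finsupp.single (L.faceMap s i) 1 := by
  rw [bdry, Finsupp.liftAddHom_apply_single, zmultiplesHom_apply]

/-- Main homological lemma: if `f` describes a `p`-gon (`p ≥ 3`) whose edges all lie in `L`,
and some vertex `f i₀` lies in no `2`-simplex of `L`, then `H̃₁(L)` is not trivial. -/
lemma no_homology_contra (L : SC m) {p : ℕ} (hp : 3 ≤ p) (f : ZMod p → Fin m)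
    (hinj : Function.Injective f)
    (he : ∀ i, ({f i, f (i + 1)} : Finset (Fin m)) ∈ L.faces)
    (i₀ : ZMod p) (hv : ∀ s : L.simp 2, f i₀ ∉ s.1)
    (hsub : Subsingleton (L.redH 1)) : False := by
  haveI : NeZero p := ⟨by omega⟩
  have h1 : (1 : ZMod p) ≠ 0 := by
    have := zmod_natCast_ne_zero (p := p) (k := 1) one_pos (by omega)
    simpa using this
  have h2 : (2 : ZMod p) ≠ 0 := by
    have := zmod_natCast_ne_zero (p := p) (k := 2) two_pos (by omega)
    simpa using this
  have hf : ∀ i : ZMod p, f i ≠ f (i + 1) := by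
    intro i hfe
    have : i = i + 1 := hinj hfe
    exact h1 (by linear_combination -this)
  -- the fundamental cycle
  set z := L.cyc f hf he with hz
  have hzcyc : z ∈ L.cycles 1 := by
    show z ∈ (L.bdry 0).ker
    exact L.bdry_cyc f hf he
  -- its class vanishes
  have hzero : ((⟨z, hzcyc⟩ : L.cycles 1) : L.redH 1) = 0 := Subsingleton.elim _ _
  have hmem := (QuotientAddGroup.eq_zero_iff (⟨z, hzcyc⟩ : L.cycles 1)).mp hzero
  rw [AddSubgroup.mem_comap] at hmem
  obtain ⟨w, hw⟩ := hmem
  have hwz : L.bdry 1 w = z := hw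
  -- but the coefficient of the edge at `f i₀` is nonzero in `z` and zero in any boundary
  set e₀ := L.edg (f i₀) (f (i₀ + 1)) (hf i₀) (he i₀) with he₀
  have hbz : ∀ u : L.Ch 2, (L.bdry 1 u) e₀ = 0 := by
    intro u
    induction u using Finsupp.induction with
    | zero => simp
    | single_add s c u _ _ ih =>
      rw [map_add, Finsupp.add_apply, ih, add_zero]
      rw [L.bdry_single 1 s c, Finsupp.smul_apply, Finsupp.finset_sum_apply]
      have hterm : ∀ i : Fin (1 + 2),
          (((-1 : ℤ) ^ (i : ℕ)) • Finsupp.single (L.faceMap s i) (1 : ℤ)) e₀ = 0 := by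
        intro i
        have hne : L.faceMap s i ≠ e₀ := by
          intro hfe
          apply hv s
          have hsub' : (L.faceMap s i).1 ⊆ s.1 := Finset.erase_subset _ _
          apply hsub'
          rw [hfe]
          show f i₀ ∈ ({f i₀, f (i₀ + 1)} : Finset (Fin m))
          simp
        rw [Finsupp.smul_apply, Finsupp.single_eq_of_ne hne.symm, smul_zero]
      rw [Finset.sum_congr rfl fun i _ => hterm i, Finset.sum_const_zero, smul_zero]
  have := hbz w
  rw [hwz] at this
  exact L.cyc_apply f hinj h1 h2 hf he i₀ this

end SC

namespace SC

variable {m : ℕ}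

lemma mem_of_flag (K : SC m) (hflag : K.IsFlag) : ∀ s : Finset (Fin m),
    (∀ a ∈ s, ∀ b ∈ s, a ≠ b → ({a, b} : Finset (Fin m)) ∈ K.faces) → s ∈ K.faces := by
  intro s
  induction s using Finset.strongInductionOn with
  | _ s ih =>
    intro h2
    by_contra hs
    have hcard := hflag.2 s hs (fun t ht =>
      ih t ht (fun a ha b hb hab => h2 a (ht.subset ha) b (ht.subset hb) hab))
    obtain ⟨a, b, hab, rfl⟩ := Finset.card_eq_two.mp hcard
    exact hs (h2 a (by simp) b (by simp) hab)

end SC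


/-- let `K` be flag on `[m]` with a full subcomplex `K_I` a `p`-cycle (`p ≥ 4`)
such that `H̃₁(K_I; ℤ) = ℤ` and `H̃₁(K_J; ℤ) = 0` for every `J ≠ I`.  Then every vertex
outside `I` is joined by an edge to every vertex of `I`, any two vertices outside `I` are
joined by an edge, and hence `K = K_I ∗ Δ^q` with `q = m - p - 1`. -/
theorem stmt4 {m p : ℕ} (hp : 4 ≤ p) (K : SC m) (hflag : K.IsFlag) (I : Finset (Fin m))
    (hcyc : K.IsPCycleOn I p)
    (hI : Nonempty ((K.full I).redH 1 ≃+ ℤ))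
    (hvan : ∀ J : Finset (Fin m), J ≠ I → Subsingleton ((K.full J).redH 1)) :
    (∀ j ∉ I, ∀ v ∈ I, ({j, v} : Finset (Fin m)) ∈ K.faces) ∧
    (∀ j₁ ∉ I, ∀ j₂ ∉ I, j₁ ≠ j₂ → ({j₁, j₂} : Finset (Fin m)) ∈ K.faces) ∧
    K.faces = {s | s ∩ I ∈ (K.full I).faces} := by
  obtain ⟨f, hinj, hIf, hfaces⟩ := hcyc
  haveI : NeZero p := ⟨by omega⟩
  have h1 : (1 : ZMod p) ≠ 0 := by
    simpa using SC.zmod_natCast_ne_zero (p := p) (k := 1) one_pos (by omega)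
  have h2 : (2 : ZMod p) ≠ 0 := by
    simpa using SC.zmod_natCast_ne_zero (p := p) (k := 2) two_pos (by omega)
  have h3 : (3 : ZMod p) ≠ 0 := by
    simpa using SC.zmod_natCast_ne_zero (p := p) (k := 3) three_pos (by omega)
  have hfI : ∀ i, f i ∈ I := fun i => (hIf (f i)).mpr ⟨i, rfl⟩
  have hedgeK : ∀ i : ZMod p, ({f i, f (i + 1)} : Finset (Fin m)) ∈ K.faces := by
    intro i
    have : ({f i, f (i + 1)} : Finset (Fin m)) ∈ (K.full I).faces := by
      rw [hfaces]; exact Or.inr (Or.inr ⟨i, rfl⟩)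
    exact this.1
  have hcard2 : ∀ s ∈ (K.full I).faces, s.card ≤ 2 := by
    intro s hsf
    rw [hfaces] at hsf
    rcases hsf with rfl | ⟨i, rfl⟩ | ⟨i, rfl⟩
    · simp
    · simp
    · exact (Finset.card_insert_le _ _).trans (by simp)
  -- PART 1
  have part1 : ∀ j ∉ I, ∀ v ∈ I, ({j, v} : Finset (Fin m)) ∈ K.faces := by
    intro j hj v hvI
    obtain ⟨i₀, rfl⟩ := (hIf v).mp hvI
    by_contra hjv
    set J := insert j I with hJ
    have hJne : J ≠ I := fun h => hj (h ▸ Finset.mem_insert_self j I)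
    apply SC.no_homology_contra (K.full J) (show 3 ≤ p by omega) f hinj ?_ i₀ ?_ (hvan J hJne)
    · intro i
      refine ⟨hedgeK i, ?_⟩
      intro x hx
      apply Finset.mem_insert_of_mem
      rcases Finset.mem_insert.mp hx with rfl | hx
      · exact hfI i
      · rw [Finset.mem_singleton.mp hx]; exact hfI (i + 1)
    · intro s hmem
      have hsK : s.1 ∈ K.faces := s.2.1.1
      have hsJ : s.1 ⊆ J := s.2.1.2
      by_cases hjs : j ∈ s.1
      · refine hjv (K.down_closed _ hsK _ ?_)
        intro x hx
        rcases Finset.mem_insert.mp hx with rfl | hx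
        · exact hjs
        · rw [Finset.mem_singleton.mp hx]; exact hmem
      · have hsI : s.1 ⊆ I := fun x hx =>
          (Finset.mem_insert.mp (hsJ hx)).resolve_left (fun h => hjs (h ▸ hx))
        have hle := hcard2 s.1 ⟨hsK, hsI⟩
        rw [s.2.2] at hle
        omega
  -- the diagonal {f 0, f 2} is not a face
  have hac : ({f 0, f 2} : Finset (Fin m)) ∉ K.faces := by
    intro hmem
    have hfull : ({f 0, f 2} : Finset (Fin m)) ∈ (K.full I).faces := by
      refine ⟨hmem, ?_⟩
      intro x hx
      rcases Finset.mem_insert.mp hx with rfl | hx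
      · exact hfI 0
      · rw [Finset.mem_singleton.mp hx]; exact hfI 2
    rw [hfaces] at hfull
    have h02 : f 0 ≠ f 2 := fun h => h2 (by linear_combination -hinj h)
    rcases hfull with habs | ⟨i, habs⟩ | ⟨i, habs⟩
    · exact absurd habs (by simp)
    · have ha0 : f 0 ∈ ({f i} : Finset (Fin m)) := by rw [← habs]; simp
      have ha2 : f 2 ∈ ({f i} : Finset (Fin m)) := by rw [← habs]; simp
      exact h02 ((Finset.mem_singleton.mp ha0).trans (Finset.mem_singleton.mp ha2).symm)
    · have ha0 : f 0 ∈ ({f i, f (i + 1)} : Finset (Fin m)) := by rw [← habs]; simp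
      have ha2 : f 2 ∈ ({f i, f (i + 1)} : Finset (Fin m)) := by rw [← habs]; simp
      simp only [Finset.mem_insert, Finset.mem_singleton] at ha0 ha2
      rcases ha0 with h0 | h0 <;> rcases ha2 with hb | hb
      · exact h2 (by linear_combination hinj hb - hinj h0)
      · exact h1 (by linear_combination hinj hb - hinj h0)
      · exact h3 (by linear_combination hinj hb - hinj h0)
      · exact h2 (by linear_combination hinj hb - hinj h0)
  -- PART 2
  have part2 : ∀ j₁ ∉ I, ∀ j₂ ∉ I, j₁ ≠ j₂ → ({j₁, j₂} : Finset (Fin m)) ∈ K.faces := by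
    intro j₁ hj₁ j₂ hj₂ hne
    by_contra hjj
    have hacne : f 0 ≠ f 2 := fun h => h2 (by linear_combination -hinj h)
    have haj1 : f 0 ≠ j₁ := fun h => hj₁ (h ▸ hfI 0)
    have haj2 : f 0 ≠ j₂ := fun h => hj₂ (h ▸ hfI 0)
    have hcj1 : f 2 ≠ j₁ := fun h => hj₁ (h ▸ hfI 2)
    have hcj2 : f 2 ≠ j₂ := fun h => hj₂ (h ▸ hfI 2)
    set J : Finset (Fin m) := {f 0, f 2, j₁, j₂} with hJ
    have hj₁J : j₁ ∈ J := by simp [hJ]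
    have hJne : J ≠ I := fun h => hj₁ (h ▸ hj₁J)
    set g : ZMod 4 → Fin m :=
      fun i => if i = 0 then f 0 else if i = 1 then j₁ else if i = 2 then f 2 else j₂ with hg
    have hg0 : g 0 = f 0 := by
      show (if (0 : ZMod 4) = 0 then f 0 else _) = f 0
      rw [if_pos rfl]
    have hg1 : g 1 = j₁ := by
      show (if (1 : ZMod 4) = 0 then f 0 else if (1 : ZMod 4) = 1 then j₁ else _) = j₁
      rw [if_neg (by decide), if_pos rfl]
    have hg2 : g 2 = f 2 := by
      show (if (2 : ZMod 4) = 0 then f 0 else if (2 : ZMod 4) = 1 then j₁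
        else if (2 : ZMod 4) = 2 then f 2 else j₂) = f 2
      rw [if_neg (by decide), if_neg (by decide), if_pos rfl]
    have hg3 : g 3 = j₂ := by
      show (if (3 : ZMod 4) = 0 then f 0 else if (3 : ZMod 4) = 1 then j₁
        else if (3 : ZMod 4) = 2 then f 2 else j₂) = j₂
      rw [if_neg (by decide), if_neg (by decide), if_neg (by decide)]
    have h4 : ∀ i : ZMod 4, i = 0 ∨ i = 1 ∨ i = 2 ∨ i = 3 := by decide
    have hvals : ∀ x y : ZMod 4, x ≠ y → g x ≠ g y := by
      intro x y
      rcases h4 x with rfl | rfl | rfl | rfl <;> rcases h4 y with rfl | rfl | rfl | rfl <;>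
        simp only [hg0, hg1, hg2, hg3] <;> intro hd <;>
        first
          | exact absurd rfl hd
          | exact haj1 | exact haj1.symm
          | exact haj2 | exact haj2.symm
          | exact hcj1 | exact hcj1.symm
          | exact hcj2 | exact hcj2.symm
          | exact hacne | exact hacne.symm
          | exact hne | exact hne.symm
    have hginj : Function.Injective g := by
      intro x y hxy
      by_contra hne2
      exact hvals x y hne2 hxy
    have hgJ : ∀ k : ZMod 4, g k ∈ J := by
      intro k
      rcases h4 k with rfl | rfl | rfl | rfl
      · rw [hg0]; simp [hJ]
      · rw [hg1]; simp [hJ]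
      · rw [hg2]; simp [hJ]
      · rw [hg3]; simp [hJ]
    have hgedge : ∀ i : ZMod 4, ({g i, g (i + 1)} : Finset (Fin m)) ∈ (K.full J).faces := by
      intro i
      have hK : ({g i, g (i + 1)} : Finset (Fin m)) ∈ K.faces := by
        rcases h4 i with rfl | rfl | rfl | rfl
        · rw [hg0, show (0 : ZMod 4) + 1 = 1 by decide, hg1, Finset.pair_comm]
          exact part1 j₁ hj₁ (f 0) (hfI 0)
        · rw [hg1, show (1 : ZMod 4) + 1 = 2 by decide, hg2]
          exact part1 j₁ hj₁ (f 2) (hfI 2)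
        · rw [hg2, show (2 : ZMod 4) + 1 = 3 by decide, hg3, Finset.pair_comm]
          exact part1 j₂ hj₂ (f 2) (hfI 2)
        · rw [hg3, show (3 : ZMod 4) + 1 = 0 by decide, hg0]
          exact part1 j₂ hj₂ (f 0) (hfI 0)
      refine ⟨hK, ?_⟩
      intro x hx
      rcases Finset.mem_insert.mp hx with rfl | hx
      · exact hgJ i
      · rw [Finset.mem_singleton.mp hx]; exact hgJ (i + 1)
    have hv : ∀ s : (K.full J).simp 2, g 0 ∉ s.1 := by
      intro s
      exfalso
      have hsK : s.1 ∈ K.faces := s.2.1.1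
      have hsJ : s.1 ⊆ J := s.2.1.2
      have hscard : s.1.card = 3 := s.2.2
      have hdiag : (f 0 ∈ s.1 ∧ f 2 ∈ s.1) ∨ (j₁ ∈ s.1 ∧ j₂ ∈ s.1) := by
        by_contra hcon
        push_neg at hcon
        obtain ⟨hx, hy⟩ := hcon
        -- pick missing elements
        obtain ⟨x₁, hx₁J, hx₁s, hx₁d⟩ :
            ∃ x₁, x₁ ∈ J ∧ x₁ ∉ s.1 ∧ (x₁ = f 0 ∨ x₁ = f 2) := by
          by_cases ha : f 0 ∈ s.1
          · exact ⟨f 2, by simp [hJ], hx ha, Or.inr rfl⟩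
          · exact ⟨f 0, by simp [hJ], ha, Or.inl rfl⟩
        obtain ⟨y₁, hy₁J, hy₁s, hy₁d⟩ :
            ∃ y₁, y₁ ∈ J ∧ y₁ ∉ s.1 ∧ (y₁ = j₁ ∨ y₁ = j₂) := by
          by_cases hb : j₁ ∈ s.1
          · exact ⟨j₂, by simp [hJ], hy hb, Or.inr rfl⟩
          · exact ⟨j₁, by simp [hJ], hb, Or.inl rfl⟩
        have hxy : y₁ ≠ x₁ := by
          rcases hx₁d with rfl | rfl <;> rcases hy₁d with rfl | rfl
          · exact haj1.symm
          · exact haj2.symm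
          · exact hcj1.symm
          · exact hcj2.symm
        have hss : s.1 ⊆ (J.erase x₁).erase y₁ := by
          intro z hz
          refine Finset.mem_erase.mpr ⟨fun h => hy₁s (h ▸ hz), ?_⟩
          exact Finset.mem_erase.mpr ⟨fun h => hx₁s (h ▸ hz), hsJ hz⟩
        have hc1 : (J.erase x₁).card = J.card - 1 := Finset.card_erase_of_mem hx₁J
        have hc2 : ((J.erase x₁).erase y₁).card = (J.erase x₁).card - 1 :=
          Finset.card_erase_of_mem (Finset.mem_erase.mpr ⟨hxy, hy₁J⟩)
        have hle := Finset.card_le_card hss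
        have hJ4 : J.card ≤ 4 := by
          rw [hJ]
          refine (Finset.card_insert_le _ _).trans (Nat.succ_le_succ ?_)
          refine (Finset.card_insert_le _ _).trans (Nat.succ_le_succ ?_)
          refine (Finset.card_insert_le _ _).trans (Nat.succ_le_succ ?_)
          simp
        omega
      rcases hdiag with ⟨ha, hc⟩ | ⟨ha, hc⟩
      · refine hac (K.down_closed _ hsK _ ?_)
        intro x hx
        rcases Finset.mem_insert.mp hx with rfl | hx
        · exact ha
        · rw [Finset.mem_singleton.mp hx]; exact hc
      · refine hjj (K.down_closed _ hsK _ ?_)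
        intro x hx
        rcases Finset.mem_insert.mp hx with rfl | hx
        · exact ha
        · rw [Finset.mem_singleton.mp hx]; exact hc
    exact SC.no_homology_contra (K.full J) (by norm_num) g hginj hgedge 0 hv (hvan J hJne)
  -- PART 3
  refine ⟨part1, part2, ?_⟩
  ext s
  simp only [Set.mem_setOf_eq]
  constructor
  · intro hs
    exact ⟨K.down_closed s hs _ Finset.inter_subset_left, Finset.inter_subset_right⟩
  · intro hs
    apply K.mem_of_flag hflag
    intro x hx y hy hxy
    by_cases hxI : x ∈ I <;> by_cases hyI : y ∈ I
    · refine K.down_closed _ hs.1 _ ?_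
      intro z hz
      rcases Finset.mem_insert.mp hz with rfl | hz
      · exact Finset.mem_inter.mpr ⟨hx, hxI⟩
      · rw [Finset.mem_singleton.mp hz]; exact Finset.mem_inter.mpr ⟨hy, hyI⟩
    · rw [Finset.pair_comm]; exact part1 y hyI x hxI
    · exact part1 x hxI y hyI
    · exact part2 x hxI y hyI hxy
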